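/- Let N be a positive integer, let M and Θ be real orthogonal 3×3 matrices, let λ₁, λ₂, λ₃ ∈ [−1,1], and let A = diag(λ₁, λ₂, λ₃). Set X = Mᵀ·A·Θ. Let (x̂_{ij})_{i,j∈{1,2,3}} be independent real random variables with E[x̂_{ij}] = X_{ij} and Var(x̂_{ij}) = (1 − X_{ij}²)/N, and define the random matrix Â = M·X̂·Θᵀ. Then Σ_{i=1}^{3} E[(Â_{ii} − λᵢ)²] = Var(Â₁₁) + Var(Â₂₂) + Var(Â₃₃) ≥ (1/N)·(3 − (λ₁² + λ₂² + λ₃²)). (Theorem 4, lower bound on the linearized loss for the contraction parameters.) -/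

import Mathlib

open MeasureTheory ProbabilityTheory Matrix

/-- Theorem 4, lower bound: with `M, Θ` orthogonal,
`A = diag(λ₁,λ₂,λ₃)` (`λᵢ ∈ [-1,1]`), `X = Mᵀ·A·Θ`, independent square-integrable
estimators `x̂_{ij}` with mean `X_{ij}` and variance `(1 - X_{ij}²)/N`, and
`Â = M·X̂·Θᵀ`, the linearized contraction-parameter loss satisfies
`Σᵢ E[(Â_{ii} - λᵢ)²] = Σᵢ Var(Â_{ii}) ≥ (1/N)(3 - (λ₁² + λ₂² + λ₃²))`. -/
theorem contraction_params_mse_lower_bound {Ω : Type*} [MeasurableSpace Ω]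
    (μ : Measure Ω) [IsProbabilityMeasure μ]
    (N : ℕ) (hN : 0 < N)
    (M Θ : Matrix (Fin 3) (Fin 3) ℝ) (hM : Mᵀ * M = 1) (hΘ : Θᵀ * Θ = 1)
    (l₁ l₂ l₃ : ℝ) (hl₁ : l₁ ∈ Set.Icc (-1 : ℝ) 1) (hl₂ : l₂ ∈ Set.Icc (-1 : ℝ) 1)
    (hl₃ : l₃ ∈ Set.Icc (-1 : ℝ) 1)
    (A X : Matrix (Fin 3) (Fin 3) ℝ)
    (hA : A = Matrix.diagonal ![l₁, l₂, l₃]) (hX : X = Mᵀ * A * Θ)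
    (xhat : Fin 3 → Fin 3 → Ω → ℝ)
    (hmeas : ∀ i j, Measurable (xhat i j))
    (hL2 : ∀ i j, MemLp (xhat i j) 2 μ)
    (hindep : iIndepFun
      (fun p : Fin 3 × Fin 3 => xhat p.1 p.2) μ)
    (hmean : ∀ i j, (∫ ω, xhat i j ω ∂μ) = X i j)
    (hvar : ∀ i j, variance (xhat i j) μ = (1 - X i j ^ 2) / N)
    (Ahat : Ω → Matrix (Fin 3) (Fin 3) ℝ)
    (hAhat : ∀ ω, Ahat ω = M * Matrix.of (fun i j => xhat i j ω) * Θᵀ) :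
    (∫ ω, ((Ahat ω 0 0 - l₁) ^ 2 + (Ahat ω 1 1 - l₂) ^ 2 + (Ahat ω 2 2 - l₃) ^ 2) ∂μ)
        = variance (fun ω => Ahat ω 0 0) μ + variance (fun ω => Ahat ω 1 1) μ
          + variance (fun ω => Ahat ω 2 2) μ
      ∧ (1 / N) * (3 - (l₁ ^ 2 + l₂ ^ 2 + l₃ ^ 2))
          ≤ variance (fun ω => Ahat ω 0 0) μ + variance (fun ω => Ahat ω 1 1) μ
            + variance (fun ω => Ahat ω 2 2) μ := by
  classical
  have hMM : M * Mᵀ = 1 := mul_eq_one_comm.mp hM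
  have hΘΘ : Θ * Θᵀ = 1 := mul_eq_one_comm.mp hΘ
  set lv : Fin 3 → ℝ := ![l₁, l₂, l₃] with hlv
  set c : Fin 3 → Fin 3 × Fin 3 → ℝ := fun i p => M i p.1 * Θ i p.2 with hc
  -- diagonal entries as linear combinations
  have hdiag : ∀ (i : Fin 3) (ω : Ω),
      Ahat ω i i = ∑ p : Fin 3 × Fin 3, c i p * xhat p.1 p.2 ω := by
    intro i ω
    rw [hAhat]
    simp only [Matrix.mul_apply, Matrix.transpose_apply, Matrix.of_apply, hc]
    rw [Fintype.sum_prod_type, Finset.sum_comm]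
    refine Finset.sum_congr rfl fun k _ => ?_
    rw [Finset.sum_mul]
    exact Finset.sum_congr rfl fun j _ => by ring
  -- integrability facts
  have hint : ∀ (i : Fin 3) (p : Fin 3 × Fin 3),
      Integrable (fun ω => c i p * xhat p.1 p.2 ω) μ :=
    fun i p => ((hL2 p.1 p.2).integrable one_le_two).const_mul _
  have hmemY : ∀ i : Fin 3, MemLp (fun ω => Ahat ω i i) 2 μ := by
    intro i
    have : MemLp (∑ p : Fin 3 × Fin 3, fun ω => c i p * xhat p.1 p.2 ω) 2 μ :=
      memLp_finset_sum' _ fun p _ => (hL2 p.1 p.2).const_mul _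
    refine this.ae_eq ?_
    filter_upwards with ω
    rw [hdiag i ω]
    simp
  -- the matrix identity : M * X * Θᵀ = A
  have hMXΘ : M * X * Θᵀ = A := by
    rw [hX, show M * (Mᵀ * A * Θ) * Θᵀ = (M * Mᵀ) * A * (Θ * Θᵀ) by
      simp only [Matrix.mul_assoc], hMM, hΘΘ, Matrix.one_mul, Matrix.mul_one]
  -- the mean of each diagonal entry
  have hmeanY : ∀ i : Fin 3, (∫ ω, Ahat ω i i ∂μ) = lv i := by
    intro i
    have h1 : (∫ ω, Ahat ω i i ∂μ)
        = ∑ p : Fin 3 × Fin 3, c i p * X p.1 p.2 := by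
      simp_rw [hdiag]
      rw [integral_finset_sum _ fun p _ => hint i p]
      exact Finset.sum_congr rfl fun p _ => by rw [integral_const_mul, hmean]
    have h2 : (M * X * Θᵀ) i i = ∑ p : Fin 3 × Fin 3, c i p * X p.1 p.2 := by
      simp only [Matrix.mul_apply, Matrix.transpose_apply, hc]
      rw [Fintype.sum_prod_type, Finset.sum_comm]
      refine Finset.sum_congr rfl fun k _ => ?_
      rw [Finset.sum_mul]
      exact Finset.sum_congr rfl fun j _ => by ring
    rw [h1, ← h2, hMXΘ, hA]
    simp [Matrix.diagonal_apply_eq, hlv]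
  -- variance of each diagonal entry
  have hvarY : ∀ i : Fin 3, variance (fun ω => Ahat ω i i) μ
      = ∑ p : Fin 3 × Fin 3, (c i p) ^ 2 * ((1 - X p.1 p.2 ^ 2) / N) := by
    intro i
    have h1 : variance (fun ω => Ahat ω i i) μ
        = variance (∑ p : Fin 3 × Fin 3, fun ω => c i p * xhat p.1 p.2 ω) μ := by
      congr 1
      funext ω
      rw [hdiag i ω]
      simp
    have hpair : Set.Pairwise (↑(Finset.univ : Finset (Fin 3 × Fin 3)))
        fun p q => IndepFun (fun ω => c i p * xhat p.1 p.2 ω)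
          (fun ω => c i q * xhat q.1 q.2 ω) μ := by
      intro p _ q _ hpq
      exact (hindep.indepFun hpq).comp
        (measurable_const_mul (c i p)) (measurable_const_mul (c i q))
    have hsum := IndepFun.variance_sum (μ := μ)
      (X := fun p : Fin 3 × Fin 3 => fun ω => c i p * xhat p.1 p.2 ω)
      (s := Finset.univ) (fun p _ => (hL2 p.1 p.2).const_mul _) hpair
    rw [h1, hsum]
    exact Finset.sum_congr rfl fun p _ => by rw [variance_const_mul, hvar]
  -- part 1 : the integral equals the sum of variances
  have heq : (∫ ω, ((Ahat ω 0 0 - l₁) ^ 2 + (Ahat ω 1 1 - l₂) ^ 2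
        + (Ahat ω 2 2 - l₃) ^ 2) ∂μ)
      = variance (fun ω => Ahat ω 0 0) μ + variance (fun ω => Ahat ω 1 1) μ
        + variance (fun ω => Ahat ω 2 2) μ := by
    have key : ∀ (i : Fin 3), (∫ ω, (Ahat ω i i - lv i) ^ 2 ∂μ)
        = variance (fun ω => Ahat ω i i) μ := by
      intro i
      rw [variance_eq_integral (hmemY i).aemeasurable, hmeanY i]
    have hintsq : ∀ (i : Fin 3), Integrable (fun ω => (Ahat ω i i - lv i) ^ 2) μ :=
      fun i => ((hmemY i).sub (memLp_const (lv i))).integrable_sq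
    have h0 : l₁ = lv 0 := rfl
    have h1 : l₂ = lv 1 := rfl
    have h2 : l₃ = lv 2 := rfl
    have hintsq01 : Integrable
        (fun ω => (Ahat ω 0 0 - lv 0) ^ 2 + (Ahat ω 1 1 - lv 1) ^ 2) μ :=
      (hintsq 0).add (hintsq 1)
    rw [h0, h1, h2]
    rw [integral_add hintsq01 (hintsq 2), integral_add (hintsq 0) (hintsq 1),
      key 0, key 1, key 2]
  refine ⟨heq, ?_⟩
  -- part 2 : the lower bound
  -- column and row norms
  have hcolM : ∀ j : Fin 3, ∑ i, M i j ^ 2 = 1 := by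
    intro j
    have h : (Mᵀ * M) j j = (1 : Matrix (Fin 3) (Fin 3) ℝ) j j := by rw [hM]
    simpa [Matrix.mul_apply, Matrix.one_apply, sq] using h
  have hrowM : ∀ i : Fin 3, ∑ j, M i j ^ 2 = 1 := by
    intro i
    have h : (M * Mᵀ) i i = (1 : Matrix (Fin 3) (Fin 3) ℝ) i i := by rw [hMM]
    simpa [Matrix.mul_apply, Matrix.one_apply, sq] using h
  have hcolΘ : ∀ k : Fin 3, ∑ i, Θ i k ^ 2 = 1 := by
    intro k
    have h : (Θᵀ * Θ) k k = (1 : Matrix (Fin 3) (Fin 3) ℝ) k k := by rw [hΘ]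
    simpa [Matrix.mul_apply, Matrix.one_apply, sq] using h
  have hrowΘ : ∀ i : Fin 3, ∑ k, Θ i k ^ 2 = 1 := by
    intro i
    have h : (Θ * Θᵀ) i i = (1 : Matrix (Fin 3) (Fin 3) ℝ) i i := by rw [hΘΘ]
    simpa [Matrix.mul_apply, Matrix.one_apply, sq] using h
  have hΘsq : ∀ (i k : Fin 3), Θ i k ^ 2 ≤ 1 := by
    intro i k
    calc Θ i k ^ 2 ≤ ∑ i', Θ i' k ^ 2 :=
          Finset.single_le_sum (fun i' _ => sq_nonneg (Θ i' k)) (Finset.mem_univ i)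
      _ = 1 := hcolΘ k
  set C : Fin 3 × Fin 3 → ℝ := fun p => ∑ i, (c i p) ^ 2 with hC
  have hCle : ∀ p, C p ≤ 1 := by
    intro p
    calc C p = ∑ i, M i p.1 ^ 2 * Θ i p.2 ^ 2 := by
          simp [hC, hc, mul_pow]
      _ ≤ ∑ i, M i p.1 ^ 2 * 1 :=
          Finset.sum_le_sum fun i _ =>
            mul_le_mul_of_nonneg_left (hΘsq i p.2) (sq_nonneg _)
      _ = 1 := by simpa using hcolM p.1
  have hCsum : ∑ p : Fin 3 × Fin 3, C p = 3 := by
    have : ∑ p : Fin 3 × Fin 3, C p = ∑ i : Fin 3, ∑ p : Fin 3 × Fin 3, (c i p) ^ 2 :=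
      Finset.sum_comm
    rw [this]
    have h1 : ∀ i : Fin 3, ∑ p : Fin 3 × Fin 3, (c i p) ^ 2 = 1 := by
      intro i
      rw [Fintype.sum_prod_type]
      calc ∑ j, ∑ k, (c i (j, k)) ^ 2 = ∑ j, M i j ^ 2 * ∑ k, Θ i k ^ 2 := by
            refine Finset.sum_congr rfl fun j _ => ?_
            rw [Finset.mul_sum]
            exact Finset.sum_congr rfl fun k _ => by simp [hc, mul_pow]
        _ = ∑ j, M i j ^ 2 := by simp [hrowΘ i]
        _ = 1 := hrowM i
    simp [h1]
  -- Frobenius norm of X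
  have hXfrob : ∑ p : Fin 3 × Fin 3, X p.1 p.2 ^ 2 = l₁ ^ 2 + l₂ ^ 2 + l₃ ^ 2 := by
    have h1 : ∑ p : Fin 3 × Fin 3, X p.1 p.2 ^ 2 = Matrix.trace (Xᵀ * X) := by
      rw [Matrix.trace]
      rw [Fintype.sum_prod_type, Finset.sum_comm]
      refine Finset.sum_congr rfl fun k _ => ?_
      simp [Matrix.diag, Matrix.mul_apply, sq]
    have h2 : Xᵀ * X = Θᵀ * (Aᵀ * A) * Θ := by
      rw [hX]
      calc (Mᵀ * A * Θ)ᵀ * (Mᵀ * A * Θ) = Θᵀ * Aᵀ * (M * Mᵀ) * A * Θ := by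
            simp only [Matrix.transpose_mul, Matrix.transpose_transpose, Matrix.mul_assoc]
        _ = Θᵀ * (Aᵀ * A) * Θ := by
            rw [hMM, Matrix.mul_one]
            simp only [Matrix.mul_assoc]
    have h3 : Matrix.trace (Θᵀ * (Aᵀ * A) * Θ) = Matrix.trace (Aᵀ * A) := by
      rw [Matrix.mul_assoc, Matrix.trace_mul_comm, Matrix.mul_assoc, hΘΘ, Matrix.mul_one]
    rw [h1, h2, h3, hA]
    simp [Matrix.diagonal_transpose, Matrix.diagonal_mul_diagonal, Matrix.trace,
      Matrix.diag, Fin.sum_univ_three, sq, hlv]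
  -- rewrite the sum of variances
  have hsumvar : variance (fun ω => Ahat ω 0 0) μ + variance (fun ω => Ahat ω 1 1) μ
      + variance (fun ω => Ahat ω 2 2) μ
      = (1 / N) * ∑ p : Fin 3 × Fin 3, C p * (1 - X p.1 p.2 ^ 2) := by
    have h1 : variance (fun ω => Ahat ω 0 0) μ + variance (fun ω => Ahat ω 1 1) μ
        + variance (fun ω => Ahat ω 2 2) μ
        = ∑ i : Fin 3, variance (fun ω => Ahat ω i i) μ := by
      rw [Fin.sum_univ_three]
    rw [h1]
    simp_rw [hvarY]
    rw [Finset.sum_comm, Finset.mul_sum]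
    refine Finset.sum_congr rfl fun p _ => ?_
    rw [← Finset.sum_mul]
    ring
  rw [hsumvar]
  have hN' : (0 : ℝ) ≤ 1 / N := by positivity
  refine mul_le_mul_of_nonneg_left ?_ hN'
  have hexp : ∑ p : Fin 3 × Fin 3, C p * (1 - X p.1 p.2 ^ 2)
      = 3 - ∑ p : Fin 3 × Fin 3, C p * X p.1 p.2 ^ 2 := by
    rw [← hCsum, ← Finset.sum_sub_distrib]
    exact Finset.sum_congr rfl fun p _ => by ring
  rw [hexp, ← hXfrob]
  have : ∑ p : Fin 3 × Fin 3, C p * X p.1 p.2 ^ 2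
      ≤ ∑ p : Fin 3 × Fin 3, X p.1 p.2 ^ 2 :=
    Finset.sum_le_sum fun p _ => by
      nlinarith [hCle p, sq_nonneg (X p.1 p.2)]
  linarith
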